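/- Let T be a monic real polynomial of degree d ≥ 2 whose derivative T' has d−1 distinct real roots c₁, ..., c_{d−1} (so T''(cᵢ) ≠ 0 for each i), and let F be any monic real polynomial of degree d. Then there exists a real number a such that, as an identity of polynomials, F(z) = (z − a)·T'(z)/d + Σ_{i=1}^{d−1} (F(cᵢ)/T''(cᵢ)) · T'(z)/(z − cᵢ), where T'(z)/(z − cᵢ) denotes the polynomial quotient of T'(z) by (z − cᵢ). -/
import Mathlib

open Polynomial

noncomputable section

/-- partial-fraction style decomposition of a monic degree-`d` polynomial
along the critical points of `T`:
`F(z) = (z - a)·T'(z)/d + Σᵢ (F(cᵢ)/T''(cᵢ)) · T'(z)/(z - cᵢ)`. -/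
theorem monic_decomposition_along_critical_points
    (d : ℕ) (hd : 2 ≤ d) (T : Polynomial ℝ) (hmonic : T.Monic) (hdeg : T.natDegree = d)
    (c : Fin (d - 1) → ℝ) (hinj : Function.Injective c)
    (hroot : ∀ i, T.derivative.eval (c i) = 0)
    (F : Polynomial ℝ) (hFmonic : F.Monic) (hFdeg : F.natDegree = d) :
    ∃ a : ℝ, F = (X - C a) * (C ((d : ℝ))⁻¹ * T.derivative) +
      ∑ i : Fin (d - 1),
        C (F.eval (c i) / (T.derivative.derivative.eval (c i))) *
          (T.derivative /ₘ (X - C (c i))) := by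
  have hd0 : (d : ℝ) ≠ 0 := Nat.cast_ne_zero.mpr (by omega)
  set P : Polynomial ℝ := ∏ i : Fin (d - 1), (X - C (c i)) with hP
  have hPmonic : P.Monic := monic_prod_of_monic _ _ fun i _ => monic_X_sub_C _
  have hPdeg : P.natDegree = d - 1 := by
    rw [hP, natDegree_prod _ _ fun i _ => X_sub_C_ne_zero (c i)]
    simp
  -- degree and leading coefficient of T'
  have hT'coeff : T.derivative.coeff (d - 1) = (d : ℝ) := by
    rw [coeff_derivative, show d - 1 + 1 = d by omega]
    rw [show T.coeff d = 1 from hdeg ▸ hmonic.coeff_natDegree]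
    rw [Nat.cast_sub (by omega : 1 ≤ d)]
    push_cast
    ring
  have hT'ne : T.derivative ≠ 0 := fun h => by simp [h] at hT'coeff; exact hd0 hT'coeff.symm
  have hT'deg : T.derivative.natDegree = d - 1 := by
    refine le_antisymm ?_ (le_natDegree_of_ne_zero (hT'coeff ▸ hd0))
    have := natDegree_derivative_le T
    omega
  have hT'lead : T.derivative.leadingCoeff = (d : ℝ) := by
    rw [leadingCoeff, hT'deg, hT'coeff]
  -- P divides any polynomial vanishing at all the cᵢ
  have hPdvd : ∀ p : Polynomial ℝ, (∀ i, p.eval (c i) = 0) → P ∣ p := by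
    intro p hp
    refine Finset.prod_dvd_of_coprime ?_ fun i _ => dvd_iff_isRoot.2 (hp i)
    exact (pairwise_coprime_X_sub_C hinj).set_pairwise _
  -- T' = d · P
  have hT'P : T.derivative = C (d : ℝ) * P := by
    obtain ⟨R, hR⟩ := hPdvd T.derivative hroot
    have hRne : R ≠ 0 := fun h => hT'ne (by rw [hR, h, mul_zero])
    have hRdeg : R.natDegree = 0 := by
      have := natDegree_mul hPmonic.ne_zero hRne
      rw [← hR, hT'deg, hPdeg] at this
      omega
    have hRC : R = C (R.coeff 0) := eq_C_of_natDegree_eq_zero hRdeg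
    have hRlead : R.coeff 0 = (d : ℝ) := by
      have : T.derivative.leadingCoeff = P.leadingCoeff * R.leadingCoeff := by
        rw [hR, leadingCoeff_mul]
      rw [hT'lead, hPmonic.leadingCoeff, one_mul] at this
      rw [hRC] at this; simpa using this.symm
    rw [hR, hRC, hRlead, mul_comm]
  -- the cofactors Q i
  set Q : Fin (d - 1) → Polynomial ℝ :=
    fun i => C (d : ℝ) * ∏ j ∈ Finset.univ.erase i, (X - C (c j)) with hQdef
  have hfact : ∀ i, T.derivative = (X - C (c i)) * Q i := by
    intro i
    rw [hT'P, hP, hQdef, ← Finset.mul_prod_erase _ _ (Finset.mem_univ i)]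
    ring
  have hQ : ∀ i, T.derivative /ₘ (X - C (c i)) = Q i := by
    intro i
    rw [hfact i, mul_divByMonic_cancel_left _ (monic_X_sub_C _)]
  -- T'' at cᵢ equals Q i at cᵢ
  have hQeval : ∀ i, (Q i).eval (c i) = (d : ℝ) * ∏ j ∈ Finset.univ.erase i, (c i - c j) := by
    intro i; simp [hQdef, eval_prod]
  have hT'' : ∀ i, T.derivative.derivative.eval (c i) = (Q i).eval (c i) := by
    intro i
    rw [hfact i, derivative_mul]
    simp
  have hT''ne : ∀ i, T.derivative.derivative.eval (c i) ≠ 0 := by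
    intro i
    rw [hT'' i, hQeval i]
    refine mul_ne_zero hd0 (Finset.prod_ne_zero_iff.2 fun j hj => ?_)
    have : j ≠ i := (Finset.mem_erase.1 hj).1
    exact sub_ne_zero.2 fun h => this (hinj h).symm
  -- the interpolation part G
  set G : Polynomial ℝ := ∑ i : Fin (d - 1),
      C (F.eval (c i) / (T.derivative.derivative.eval (c i))) *
        (T.derivative /ₘ (X - C (c i))) with hG
  have hGeval : ∀ j, G.eval (c j) = F.eval (c j) := by
    intro j
    rw [hG, eval_finset_sum]
    rw [Finset.sum_eq_single j]
    · rw [hQ j]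
      simp only [eval_mul, eval_C]
      rw [← hT'' j, div_mul_cancel₀ _ (hT''ne j)]
    · intro i _ hij
      rw [hQ i]
      simp only [eval_mul, eval_C, hQdef, eval_prod]
      have : (∏ k ∈ Finset.univ.erase i, (c j - c k)) = 0 :=
        Finset.prod_eq_zero (Finset.mem_erase.2 ⟨Ne.symm hij, Finset.mem_univ j⟩) (sub_self _)
      simp [this]
    · simp
  -- degree bound for G
  have hGdeg : G.natDegree < d := by
    have : G.natDegree ≤ d - 2 := by
      refine natDegree_sum_le_of_forall_le _ _ fun i _ => ?_
      refine (natDegree_mul_le).trans ?_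
      rw [hQ i, hQdef]
      simp only [natDegree_C, zero_add]
      refine (natDegree_mul_le).trans ?_
      simp only [natDegree_C, zero_add]
      refine (natDegree_prod_le _ _).trans ?_
      simp [Finset.card_erase_of_mem]
      omega
    omega
  -- F - G is a multiple of P
  have hHroot : ∀ i, (F - G).eval (c i) = 0 := by
    intro i; simp [hGeval i]
  obtain ⟨R, hR⟩ := hPdvd (F - G) hHroot
  have hHdeg : (F - G).natDegree = d := by
    rw [natDegree_sub_eq_left_of_natDegree_lt (by omega : G.natDegree < F.natDegree), hFdeg]
  have hHmonic : (F - G).Monic := by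
    refine hFmonic.sub_of_left ?_
    refine degree_lt_degree ?_
    omega
  have hRne : R ≠ 0 := by
    intro h
    rw [h, mul_zero] at hR
    exact hHmonic.ne_zero hR
  have hRdeg : R.natDegree = 1 := by
    have := natDegree_mul hPmonic.ne_zero hRne
    rw [← hR, hHdeg, hPdeg] at this
    omega
  have hRmonic : R.Monic := by
    have : (F - G).leadingCoeff = P.leadingCoeff * R.leadingCoeff := by
      rw [hR, leadingCoeff_mul]
    rw [hHmonic.leadingCoeff, hPmonic.leadingCoeff, one_mul] at this
    exact this.symm
  obtain ⟨b, hb⟩ : ∃ b, R = X + C b := ⟨R.coeff 0, hRmonic.eq_X_add_C hRdeg⟩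
  refine ⟨-b, ?_⟩
  have hPinv : C ((d : ℝ))⁻¹ * T.derivative = P := by
    rw [hT'P, ← mul_assoc, ← C_mul, inv_mul_cancel₀ hd0, C_1, one_mul]
  rw [hPinv]
  have : F = P * R + G := by rw [← hR]; ring
  rw [this, hb, map_neg]
  ring
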